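/- Let M = ℂ[a^+(−m−1/2), a^−(−m−1/2) : m ∈ ℤ≥0] be the polynomial algebra in the doubly-indexed variables, graded by charge (a^+ variables have charge +1, a^− variables charge −1) and by weight (variable a^±(−m−1/2) has weight m+1/2). Then the Hilbert–Poincaré series of the charge-zero subalgebra M₀ equals (1/(q)_∞) Σ_{k≥0} q^{k²+k}/((q)_k)². Here M₀ is spanned by monomials with equally many a^+ and a^− factors, and the weight of a monomial a^+(−n_1−1/2)⋯a^+(−n_r−1/2)a^−(−k_1−1/2)⋯a^−(−k_r−1/2) is Σ(n_i+1/2)+Σ(k_j+1/2) with n_1 ≥ ⋯ ≥ n_r ≥ 0, k_1 ≥ ⋯ ≥ k_r ≥ 0 (repetitions allowed). -/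

import Mathlib

/- Hilbert–Poincaré series of the charge-zero subalgebra M₀ of the commutative
   algebra M = ℂ[a^±(−m−1/2) : m ≥ 0]:
       Σ_w dim M₀(w) q^w = (1/(q)_∞) Σ_{k≥0} q^{k²+k}/((q)_k)².
   A basis of M₀(w) is given by the monomials
   a⁺(−n₁−1/2)⋯a⁺(−n_r−1/2)a⁻(−k₁−1/2)⋯a⁻(−k_r−1/2) with
   n₁ ≥ ⋯ ≥ n_r ≥ 0, k₁ ≥ ⋯ ≥ k_r ≥ 0 (repetitions allowed) and weight
   Σ(nᵢ+1/2)+Σ(kⱼ+1/2) = Σnᵢ + Σkⱼ + r = w, i.e. by pairs of multisets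
   (A, B) over ℤ≥0 with |A| = |B| and A.sum + B.sum + |A| = w.
   Stated coefficientwise: replacing (q)_∞ by (q)_{N+1} and truncating the sum
   at k ≤ N does not affect the coefficient of q^N. -/

open PowerSeries Finset

/-- `(q)_k = ∏_{i=1}^k (1 - q^i)` in `ℚ[[q]]`. -/
noncomputable def qPoch (k : ℕ) : PowerSeries ℚ :=
  ∏ i ∈ Finset.range k, (1 - (PowerSeries.X : PowerSeries ℚ) ^ (i + 1))

/-- The dimension of the weight-`w` subspace of `M₀`: the number of pairs of
multisets over ℤ≥0 of equal cardinality `r` with total weight `w`. -/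
noncomputable def dimM0 (w : ℕ) : ℕ :=
  Nat.card {p : Multiset ℕ × Multiset ℕ //
    Multiset.card p.1 = Multiset.card p.2 ∧
      p.1.sum + p.2.sum + Multiset.card p.1 = w}

noncomputable def mcount (r n : ℕ) : ℕ :=
  Nat.card {A : Multiset ℕ // Multiset.card A = r ∧ A.sum = n}

lemma multiset_finite_aux {N : ℕ} {P : Multiset ℕ → Prop}
    (hc : ∀ A, P A → Multiset.card A ≤ N) (hs : ∀ A, P A → ∀ a ∈ A, a ≤ N) :
    Finite {A : Multiset ℕ // P A} := by
  apply Finite.of_injective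
    (fun x : {A : Multiset ℕ // P A} =>
      (fun i : Fin (N + 1) => (⟨x.1.count i.1, by
        exact Nat.lt_succ_of_le ((Multiset.count_le_card _ _).trans (hc x.1 x.2))⟩ : Fin (N + 1))))
  intro x y h
  ext1
  ext a
  by_cases ha : a ≤ N
  · have := congrFun h ⟨a, Nat.lt_succ_of_le ha⟩
    simpa using congrArg Fin.val this
  · rw [Multiset.count_eq_zero_of_notMem, Multiset.count_eq_zero_of_notMem]
    · intro hm; exact ha (hs y.1 y.2 a hm)
    · intro hm; exact ha (hs x.1 x.2 a hm)

lemma mcount_finite (r n : ℕ) : Finite {A : Multiset ℕ // Multiset.card A = r ∧ A.sum = n} := by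
  refine multiset_finite_aux (N := r + n) ?_ ?_
  · rintro A ⟨h1, h2⟩; omega
  · rintro A ⟨h1, h2⟩ a ha
    have : a ≤ A.sum := Multiset.single_le_sum (fun x _ => Nat.zero_le x) a ha
    omega

lemma mcount_zero (n : ℕ) : mcount 0 n = if n = 0 then 1 else 0 := by
  unfold mcount
  split_ifs with h
  · subst h
    rw [Nat.card_eq_one_iff_unique.2]
    constructor
    · constructor
      rintro ⟨A, hA, hs⟩ ⟨B, hB, hbs⟩
      have : A = 0 := Multiset.card_eq_zero.mp hA
      have : B = 0 := Multiset.card_eq_zero.mp hB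
      simp_all
    · exact ⟨⟨0, by simp⟩⟩
  · haveI : IsEmpty {A : Multiset ℕ // Multiset.card A = 0 ∧ A.sum = n} := ?_
    · exact Nat.card_of_isEmpty
    constructor
    rintro ⟨A, hA, hs⟩
    have : A = 0 := Multiset.card_eq_zero.mp hA
    subst this
    simp at hs
    omega

lemma sum_map_add_one (B : Multiset ℕ) : (B.map (· + 1)).sum = B.sum + Multiset.card B := by
  induction B using Multiset.induction with
  | empty => simp
  | cons a s ih => simp [ih]; omega

lemma map_sub_add {A : Multiset ℕ} (h : (0:ℕ) ∉ A) : (A.map (· - 1)).map (· + 1) = A := by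
  rw [Multiset.map_map]
  have : ∀ a ∈ A, (a - 1) + 1 = a := by
    intro a ha
    have : a ≠ 0 := fun h0 => h (h0 ▸ ha)
    omega
  calc A.map (fun a => (a - 1) + 1) = A.map id := Multiset.map_congr rfl this
  _ = A := Multiset.map_id A

lemma mcount_succ (r n : ℕ) :
    mcount (r + 1) n
      = mcount r n + if r + 1 ≤ n then mcount (r + 1) (n - (r + 1)) else 0 := by
  classical
  haveI := mcount_finite (r+1) n
  haveI := mcount_finite r n
  haveI := mcount_finite (r+1) (n - (r+1))
  set α := {A : Multiset ℕ // Multiset.card A = r + 1 ∧ A.sum = n} with hα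
  let pz : α → Prop := fun x => (0:ℕ) ∈ x.1
  have hsplit : Nat.card α
      = Nat.card {x : α // pz x} + Nat.card {x : α // ¬ pz x} := by
    rw [← Nat.card_sum]
    exact (Nat.card_congr (Equiv.sumCompl pz)).symm
  have e1 : {x : α // pz x} ≃ {A : Multiset ℕ // Multiset.card A = r ∧ A.sum = n} := by
    refine ⟨fun x => ⟨x.1.1.erase 0, ?_, ?_⟩, fun B => ⟨⟨0 ::ₘ B.1, ?_, ?_⟩, Multiset.mem_cons_self 0 B.1⟩, ?_, ?_⟩
    · rw [Multiset.card_erase_of_mem x.2, x.1.2.1]; rfl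
    · have h := Multiset.cons_erase x.2
      have := congrArg Multiset.sum h
      rw [Multiset.sum_cons] at this
      have hs := x.1.2.2
      omega
    · simp [B.2.1]
    · simp [B.2.2]
    · intro x; exact Subtype.ext (Subtype.ext (Multiset.cons_erase x.2))
    · intro B; exact Subtype.ext (Multiset.erase_cons_head 0 B.1)
  by_cases hn : r + 1 ≤ n
  · have e2 : {x : α // ¬ pz x}
        ≃ {A : Multiset ℕ // Multiset.card A = r + 1 ∧ A.sum = n - (r + 1)} := by
      refine ⟨fun x => ⟨x.1.1.map (· - 1), ?_, ?_⟩,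
        fun B => ⟨⟨B.1.map (· + 1), ?_, ?_⟩, ?_⟩, ?_, ?_⟩
      · simp [x.1.2.1]
      · have hrec := map_sub_add x.2
        have := congrArg Multiset.sum hrec
        rw [sum_map_add_one] at this
        have hc : Multiset.card (x.1.1.map (· - 1)) = r + 1 := by simp [x.1.2.1]
        rw [hc, x.1.2.2] at this
        omega
      · simp [B.2.1]
      · rw [sum_map_add_one, B.2.1, B.2.2]; omega
      · intro hmem
        rcases Multiset.mem_map.mp hmem with ⟨a, _, ha⟩
        omega
      · intro x; exact Subtype.ext (Subtype.ext (map_sub_add x.2))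
      · intro B
        apply Subtype.ext
        show (B.1.map (· + 1)).map (· - 1) = B.1
        rw [Multiset.map_map]
        calc B.1.map (fun a => (a + 1) - 1) = B.1.map id := Multiset.map_congr rfl (by intro a ha; simp)
        _ = B.1 := Multiset.map_id B.1
    rw [if_pos hn]
    unfold mcount
    rw [hsplit, Nat.card_congr e1, Nat.card_congr e2]
  · haveI : IsEmpty {x : α // ¬ pz x} := by
      constructor
      rintro ⟨⟨A, hc, hs⟩, h0⟩
      have : Multiset.card A • 1 ≤ A.sum := by
        apply Multiset.card_nsmul_le_sum
        intro x hx
        have : x ≠ 0 := by rintro rfl; exact h0 hx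
        omega
      simp [hc, hs] at this
      omega
    rw [if_neg hn]
    unfold mcount
    have h0 : Nat.card {x : α // ¬ pz x} = 0 := Nat.card_of_isEmpty
    rw [hsplit, Nat.card_congr e1, h0]

noncomputable def mser (r : ℕ) : PowerSeries ℚ := PowerSeries.mk fun n => (mcount r n : ℚ)

lemma mser_zero : mser 0 = 1 := by
  ext n
  simp [mser, mcount_zero, PowerSeries.coeff_one]

lemma qPoch_succ (r : ℕ) : qPoch (r + 1) = qPoch r * (1 - X ^ (r + 1)) :=
  Finset.prod_range_succ _ r

lemma one_sub_X_pow_mul_mser (r : ℕ) : (1 - X ^ (r + 1)) * mser (r + 1) = mser r := by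
  ext n
  rw [sub_mul, one_mul, map_sub]
  rw [PowerSeries.coeff_X_pow_mul']
  simp only [mser, PowerSeries.coeff_mk]
  rw [mcount_succ r n]
  split_ifs with h
  · push_cast; ring
  · push_cast; ring

lemma qPoch_mul_mser (r : ℕ) : qPoch r * mser r = 1 := by
  induction r with
  | zero => simp [qPoch, mser_zero]
  | succ r ih =>
      rw [qPoch_succ, mul_assoc, one_sub_X_pow_mul_mser, ih]

lemma qPoch_ne_zero (r : ℕ) : qPoch r ≠ 0 :=
  left_ne_zero_of_mul_eq_one (qPoch_mul_mser r)

lemma qPoch_inv (r : ℕ) : (qPoch r)⁻¹ = mser r := by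
  have hc : PowerSeries.constantCoeff (R := ℚ) (qPoch r) ≠ 0 := by
    have : PowerSeries.constantCoeff (R := ℚ) (qPoch r) = 1 := by
      simp [qPoch, map_prod]
    rw [this]; exact one_ne_zero
  rw [PowerSeries.inv_eq_iff_mul_eq_one hc]
  rw [mul_comm]; exact qPoch_mul_mser r

lemma mser_succ (r : ℕ) : mser (r + 1) = mser r + X ^ (r + 1) * mser (r + 1) := by
  have h := one_sub_X_pow_mul_mser r
  rw [sub_mul, one_mul] at h
  linear_combination h


lemma qPoch_succ_mul_mser' (m : ℕ) : qPoch (m + 1) * mser m = 1 - X ^ (m + 1) := by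
  rw [qPoch_succ]
  calc qPoch m * (1 - X ^ (m+1)) * mser m = (qPoch m * mser m) * (1 - X ^ (m+1)) := by ring
  _ = 1 - X ^ (m + 1) := by rw [qPoch_mul_mser]; ring

lemma euler (M : ℕ) : ∑ s ∈ Finset.range (M + 1), X ^ s * mser s = mser M := by
  induction M with
  | zero => simp [mser_zero]
  | succ M ih =>
      rw [Finset.sum_range_succ, ih, ← mser_succ]

lemma pascal {n j : ℕ} (hj : j < n) :
    qPoch (n + 1) * (mser (j + 1) * mser (n - j))
      = qPoch n * (mser (j + 1) * mser (n - 1 - j))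
        + X ^ (n - j) * (qPoch n * (mser j * mser (n - j))) := by
  have hU : qPoch (j + 1) * qPoch (n - j) ≠ 0 :=
    mul_ne_zero (qPoch_ne_zero _) (qPoch_ne_zero _)
  apply mul_left_cancel₀ hU
  have e3 : qPoch (n - j) * mser (n - 1 - j) = 1 - X ^ (n - j) := by
    have h1 : n - j = (n - 1 - j) + 1 := by omega
    rw [h1]
    exact qPoch_succ_mul_mser' (n - 1 - j)
  have e4 : qPoch (j + 1) * mser j = 1 - X ^ (j + 1) := qPoch_succ_mul_mser' j
  calc qPoch (j + 1) * qPoch (n - j) * (qPoch (n + 1) * (mser (j + 1) * mser (n - j)))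
      = (qPoch (j + 1) * mser (j + 1)) * ((qPoch (n - j) * mser (n - j)) * qPoch (n + 1)) := by
        ring
    _ = qPoch n * (1 - X ^ (n + 1)) := by
        rw [qPoch_mul_mser, qPoch_mul_mser, qPoch_succ]; ring
    _ = (1 - X ^ (n - j)) * qPoch n
          + (1 - X ^ (j + 1)) * (1 * (X ^ (n - j) * qPoch n)) := by
        have hx : X ^ (n - j) * X ^ (j + 1) = (X : PowerSeries ℚ) ^ (n + 1) := by
          rw [← pow_add]
          congr 1
          omega
        linear_combination (qPoch n) * hx
    _ = (qPoch (j + 1) * mser (j + 1)) * (qPoch (n - j) * mser (n - 1 - j)) * qPoch n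
          + (qPoch (j + 1) * mser j) * ((qPoch (n - j) * mser (n - j)) * (X ^ (n - j) * qPoch n)) := by
        rw [qPoch_mul_mser, qPoch_mul_mser, e3, e4]
        ring
    _ = qPoch (j + 1) * qPoch (n - j) *
          (qPoch n * (mser (j + 1) * mser (n - 1 - j))
            + X ^ (n - j) * (qPoch n * (mser j * mser (n - j)))) := by ring

lemma Tid : ∀ n a : ℕ,
    ∑ k ∈ Finset.range (n + 1),
        X ^ (k * k + a * k) * (qPoch n * (mser k * (mser (n - k) * mser (k + a))))
      = mser (n + a) := by
  intro n
  induction n with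
  | zero =>
      intro a
      simp [qPoch, mser_zero]
  | succ n ih =>
      intro a
      -- split off k = 0 and k = n+1
      rw [Finset.sum_range_succ']  -- sum_{k<n+2} f k = sum_{j<n+1} f (j+1) + f 0
      rw [Finset.sum_range_succ]   -- sum_{j<n+1} g j = sum_{j<n} g j + g n
      -- rewrite each j < n term via pascal
      have hterm : ∀ j ∈ Finset.range n,
          X ^ ((j+1) * (j+1) + a * (j+1)) *
              (qPoch (n+1) * (mser (j+1) * (mser (n + 1 - (j+1)) * mser ((j+1) + a))))
            = X ^ ((j+1) * (j+1) + a * (j+1)) *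
                (qPoch n * (mser (j+1) * (mser (n - 1 - j) * mser ((j+1) + a))))
              + X ^ (n + 1 + a) *
                (X ^ (j * j + (a+1) * j) * (qPoch n * (mser j * (mser (n - j) * mser (j + (a+1)))))) := by
        intro j hj
        have hj' : j < n := Finset.mem_range.mp hj
        have hp := pascal hj'
        have hn1 : n + 1 - (j + 1) = n - j := by omega
        rw [hn1]
        have expand : X ^ ((j+1) * (j+1) + a * (j+1)) *
              (qPoch (n+1) * (mser (j+1) * (mser (n - j) * mser ((j+1) + a))))
            = X ^ ((j+1) * (j+1) + a * (j+1)) * mser ((j+1)+a) *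
                (qPoch (n+1) * (mser (j+1) * mser (n - j))) := by ring
        rw [expand, hp]
        have hexp : (j+1) * (j+1) + a * (j+1) + (n - j) = (n + 1 + a) + (j * j + (a+1) * j) := by
          obtain ⟨d, rfl⟩ : ∃ d, n = j + (d + 1) := ⟨n - j - 1, by omega⟩
          have hnd : j + (d + 1) - j = d + 1 := by omega
          rw [hnd]
          ring
        have hXeq : X ^ ((j+1) * (j+1) + a * (j+1)) * X ^ (n - j)
            = (X : PowerSeries ℚ) ^ (n + 1 + a) * X ^ (j * j + (a+1) * j) := by
          rw [← pow_add, ← pow_add, hexp]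
        have : j + 1 + a = j + (a + 1) := by omega
        rw [this]
        linear_combination (mser (j + (a+1))) * (qPoch n) * (mser j) * (mser (n-j)) * hXeq
      rw [Finset.sum_congr rfl hterm]
      rw [Finset.sum_add_distrib]
      rw [← Finset.mul_sum]
      -- IH at a, with first term split off
      have hIH1 := ih a
      rw [Finset.sum_range_succ'] at hIH1
      have hg : ∀ j ∈ Finset.range n,
          X ^ ((j+1) * (j+1) + a * (j+1)) *
              (qPoch n * (mser (j+1) * (mser (n - (j+1)) * mser ((j+1) + a))))
            = X ^ ((j+1) * (j+1) + a * (j+1)) *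
                (qPoch n * (mser (j+1) * (mser (n - 1 - j) * mser ((j+1) + a)))) := by
        intro j hj
        have : n - (j + 1) = n - 1 - j := by omega
        rw [this]
      rw [Finset.sum_congr rfl hg] at hIH1
      -- IH at a+1, with last term split off
      have hIH2 := ih (a + 1)
      rw [Finset.sum_range_succ] at hIH2
      rw [show n + (a + 1) = n + 1 + a by omega] at hIH2
      -- boundary simplifications
      have hf0 : X ^ (0 * 0 + a * 0) *
          (qPoch (n+1) * (mser 0 * (mser (n + 1 - 0) * mser (0 + a)))) = mser a := by
        simp only [Nat.mul_zero, Nat.zero_mul, pow_zero, one_mul, Nat.sub_zero, Nat.zero_add,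
          mser_zero]
        linear_combination mser a * qPoch_mul_mser (n + 1)
      have hF0 : X ^ (0 * 0 + a * 0) *
          (qPoch n * (mser 0 * (mser (n - 0) * mser (0 + a)))) = mser a := by
        simp only [Nat.mul_zero, Nat.zero_mul, pow_zero, one_mul, Nat.sub_zero, Nat.zero_add,
          mser_zero]
        linear_combination mser a * qPoch_mul_mser n
      have hHn : X ^ (n * n + (a+1) * n) *
          (qPoch n * (mser n * (mser (n - n) * mser (n + 1 + a))))
            = X ^ (n * n + (a+1) * n) * mser (n + 1 + a) := by
        rw [Nat.sub_self, mser_zero]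
        linear_combination X ^ (n * n + (a+1) * n) * mser (n + 1 + a) * qPoch_mul_mser n
      have hfn1 : X ^ ((n+1) * (n+1) + a * (n+1)) *
          (qPoch (n+1) * (mser (n+1) * (mser (n + 1 - (n+1)) * mser ((n+1) + a))))
            = X ^ ((n+1) * (n+1) + a * (n+1)) * mser (n + 1 + a) := by
        rw [Nat.sub_self, mser_zero]
        linear_combination X ^ ((n+1) * (n+1) + a * (n+1)) * mser (n + 1 + a) * qPoch_mul_mser (n+1)
      have hms : mser (n + 1 + a) = mser (n + a) + X ^ (n + 1 + a) * mser (n + 1 + a) := by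
        have h := mser_succ (n + a)
        rw [show n + a + 1 = n + 1 + a by omega] at h
        exact h
      have hXE : (X : PowerSeries ℚ) ^ (n + 1 + a) * X ^ (n * n + (a+1) * n)
          = (X : PowerSeries ℚ) ^ ((n+1) * (n+1) + a * (n+1)) := by
        rw [← pow_add]
        congr 1
        ring
      rw [hfn1]
      linear_combination hIH1 + X ^ (n + 1 + a) * hIH2 + hf0 - hF0
        - X ^ (n + 1 + a) * hHn + mser (n + 1 + a) * hXE - hms

lemma durfee (r : ℕ) :
    mser r * mser r
      = ∑ k ∈ Finset.range (r + 1), X ^ (k * k) * (mser k * mser k * mser (r - k)) := by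
  apply mul_left_cancel₀ (qPoch_ne_zero r)
  have h := Tid r 0
  rw [Nat.add_zero] at h
  calc qPoch r * (mser r * mser r)
      = (qPoch r * mser r) * mser r := by ring
    _ = mser r := by rw [qPoch_mul_mser]; ring
    _ = ∑ k ∈ Finset.range (r + 1),
          X ^ (k * k + 0 * k) * (qPoch r * (mser k * (mser (r - k) * mser (k + 0)))) := h.symm
    _ = qPoch r * ∑ k ∈ Finset.range (r + 1),
          X ^ (k * k) * (mser k * mser k * mser (r - k)) := by
        rw [Finset.mul_sum]
        apply Finset.sum_congr rfl
        intro k hk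
        rw [Nat.zero_mul, Nat.add_zero, Nat.add_zero]
        ring

lemma starId (M : ℕ) :
    ∑ r ∈ Finset.range (M + 1), X ^ r * (mser r * mser r)
      = ∑ k ∈ Finset.range (M + 1), X ^ (k * k + k) * (mser k * mser k * mser (M - k)) := by
  have step1 : ∑ r ∈ Finset.range (M + 1), X ^ r * (mser r * mser r)
      = ∑ r ∈ Finset.range (M + 1), ∑ k ∈ Finset.range (r + 1),
          X ^ r * (X ^ (k * k) * (mser k * mser k * mser (r - k))) := by
    apply Finset.sum_congr rfl
    intro r hr
    rw [durfee r, Finset.mul_sum]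
  rw [step1]
  have hcomm := (Finset.sum_Ico_Ico_comm 0 (M + 1)
    (fun k r => X ^ r * (X ^ (k * k) * (mser k * mser k * mser (r - k))))).symm
  simp only [Nat.Ico_zero_eq_range] at hcomm
  rw [hcomm]
  apply Finset.sum_congr rfl
  intro k hk
  have hk' : k ≤ M := by simpa using Finset.mem_range.mp hk |> Nat.lt_succ_iff.mp
  rw [Finset.sum_Ico_eq_sum_range]
  have hMk : M + 1 - k = (M - k) + 1 := by omega
  rw [hMk]
  have hterm : ∀ i ∈ Finset.range ((M - k) + 1),
      X ^ (k + i) * (X ^ (k * k) * (mser k * mser k * mser (k + i - k)))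
        = X ^ (k * k + k) * (mser k * mser k * (X ^ i * mser i)) := by
    intro i hi
    rw [show k + i - k = i by omega, pow_add, pow_add]
    ring
  rw [Finset.sum_congr rfl hterm, ← Finset.mul_sum]
  have : ∑ i ∈ Finset.range (M - k + 1), mser k * mser k * (X ^ i * mser i)
      = mser k * mser k * mser (M - k) := by
    rw [← Finset.mul_sum, euler (M - k)]
  rw [this]

lemma mser_sub_dvd (m k : ℕ) : (X : PowerSeries ℚ) ^ (m + 1) ∣ (mser m - mser (m + k)) := by
  induction k with
  | zero => simp
  | succ k ih =>
      have h1 : mser (m + k + 1) = mser (m + k) + X ^ (m + k + 1) * mser (m + k + 1) :=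
        mser_succ (m + k)
      have : mser m - mser (m + (k + 1))
          = (mser m - mser (m + k)) - X ^ (m + k + 1) * mser (m + k + 1) := by
        rw [show m + (k + 1) = m + k + 1 by omega]
        linear_combination -h1
      rw [this]
      exact dvd_sub ih (Dvd.dvd.mul_right (pow_dvd_pow X (by omega)) _)

lemma coeff_main (N : ℕ) :
    PowerSeries.coeff (R := ℚ) N
        ((qPoch (N + 1))⁻¹ *
          ∑ k ∈ Finset.range (N + 1),
            (PowerSeries.X : PowerSeries ℚ) ^ (k ^ 2 + k) * ((qPoch k)⁻¹) ^ 2)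
      = PowerSeries.coeff (R := ℚ) N
          (∑ r ∈ Finset.range (N + 1), X ^ r * (mser r * mser r)) := by
  simp only [qPoch_inv]
  have hB : mser (N + 1) *
        ∑ k ∈ Finset.range (N + 1), (X : PowerSeries ℚ) ^ (k ^ 2 + k) * (mser k) ^ 2
      = ∑ k ∈ Finset.range (N + 1),
          X ^ (k * k + k) * (mser k * mser k * mser (N + 1)) := by
    rw [Finset.mul_sum]
    apply Finset.sum_congr rfl
    intro k hk
    rw [show k ^ 2 + k = k * k + k by rw [pow_two]]
    ring
  rw [hB, starId N]
  -- difference has all coefficients ≤ N zero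
  have hdvd : ∀ k ∈ Finset.range (N + 1),
      (X : PowerSeries ℚ) ^ (N + 1) ∣
        (X ^ (k * k + k) * (mser k * mser k * mser (N + 1))
          - X ^ (k * k + k) * (mser k * mser k * mser (N - k))) := by
    intro k hk
    have hk' : k ≤ N := Nat.lt_succ_iff.mp (Finset.mem_range.mp hk)
    have h1 : (X : PowerSeries ℚ) ^ (N - k + 1) ∣ (mser (N + 1) - mser (N - k)) := by
      have := mser_sub_dvd (N - k) (k + 1)
      rw [show N - k + (k + 1) = N + 1 by omega] at this
      have h2 := dvd_neg.mpr this
      rwa [neg_sub] at h2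
    have hdiff : X ^ (k * k + k) * (mser k * mser k * mser (N + 1))
          - X ^ (k * k + k) * (mser k * mser k * mser (N - k))
        = X ^ (k * k + k) * (mser k * mser k * (mser (N + 1) - mser (N - k))) := by
      ring
    rw [hdiff]
    have h2 : (X : PowerSeries ℚ) ^ (k * k + k) * X ^ (N - k + 1) ∣
        X ^ (k * k + k) * (mser k * mser k * (mser (N + 1) - mser (N - k))) :=
      mul_dvd_mul_left _ (Dvd.dvd.mul_left h1 _)
    refine dvd_trans ?_ h2
    rw [← pow_add]
    apply pow_dvd_pow
    have hlin : ∀ m : ℕ, N + 1 ≤ m + k + (N - k + 1) := by intro m; omega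
    exact hlin (k * k)
  have hzero : PowerSeries.coeff (R := ℚ) N
      (∑ k ∈ Finset.range (N + 1),
          (X ^ (k * k + k) * (mser k * mser k * mser (N + 1))
            - X ^ (k * k + k) * (mser k * mser k * mser (N - k)))) = 0 := by
    rw [map_sum]
    apply Finset.sum_eq_zero
    intro k hk
    exact PowerSeries.X_pow_dvd_iff.mp (hdvd k hk) N (Nat.lt_succ_self N)
  rw [Finset.sum_sub_distrib, map_sub] at hzero
  exact sub_eq_zero.mp hzero

lemma dimM0_finite (N : ℕ) : Finite {p : Multiset ℕ × Multiset ℕ //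
    Multiset.card p.1 = Multiset.card p.2 ∧
      p.1.sum + p.2.sum + Multiset.card p.1 = N} := by
  haveI h1 : Finite {A : Multiset ℕ // A.sum + Multiset.card A ≤ N} := by
    apply multiset_finite_aux (N := N)
    · intro A h; omega
    · intro A h a ha
      have : a ≤ A.sum := Multiset.single_le_sum (fun x _ => Nat.zero_le x) a ha
      omega
  apply Finite.of_injective (β := {A : Multiset ℕ // A.sum + Multiset.card A ≤ N} ×
      {A : Multiset ℕ // A.sum + Multiset.card A ≤ N})
    (fun x => (⟨x.1.1, by have := x.2; omega⟩, ⟨x.1.2, by have := x.2; omega⟩))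
  intro x y h
  apply Subtype.ext
  have h1 := congrArg (fun z => z.1.1) h
  have h2 := congrArg (fun z => z.2.1) h
  exact Prod.ext h1 h2

lemma dimM0_eq (N : ℕ) :
    dimM0 N = ∑ r ∈ Finset.range (N + 1), ∑ p ∈ Finset.HasAntidiagonal.antidiagonal (N - r),
      mcount r p.1 * mcount r p.2 := by
  classical
  haveI := dimM0_finite N
  haveI := Fintype.ofFinite {p : Multiset ℕ × Multiset ℕ //
    Multiset.card p.1 = Multiset.card p.2 ∧
      p.1.sum + p.2.sum + Multiset.card p.1 = N}
  set α := {p : Multiset ℕ × Multiset ℕ //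
    Multiset.card p.1 = Multiset.card p.2 ∧
      p.1.sum + p.2.sum + Multiset.card p.1 = N} with hα
  have key : ∀ r a : ℕ,
      Nat.card {x : α // (Multiset.card (x.1).1, (x.1).1.sum) = (r, a)}
        = if r + a ≤ N then mcount r a * mcount r (N - r - a) else 0 := by
    intro r a
    split_ifs with hra
    · simp only [mcount]
      rw [← Nat.card_prod]
      apply Nat.card_congr
      refine ⟨fun x => (⟨(x.1.1).1, ?_, ?_⟩, ⟨(x.1.1).2, ?_, ?_⟩),
        fun pq => ⟨⟨(pq.1.1, pq.2.1), ?_, ?_⟩, ?_⟩, fun x => ?_, fun pq => ?_⟩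
      · exact (Prod.mk.injEq _ _ _ _).mp x.2 |>.1
      · exact (Prod.mk.injEq _ _ _ _).mp x.2 |>.2
      · have hc := x.1.2.1
        have hr := (Prod.mk.injEq _ _ _ _).mp x.2 |>.1
        omega
      · have hc := x.1.2.2
        have hr := (Prod.mk.injEq _ _ _ _).mp x.2 |>.1
        have ha := (Prod.mk.injEq _ _ _ _).mp x.2 |>.2
        omega
      · have h1 := pq.1.2.1
        have h2 := pq.2.2.1
        simp only
        omega
      · have h1 := pq.1.2.2
        have h2 := pq.2.2.2
        have h3 := pq.1.2.1
        simp only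
        omega
      · have h1 := pq.1.2.1
        have h2 := pq.1.2.2
        simp only
        rw [h1, h2]
      · apply Subtype.ext; apply Subtype.ext; rfl
      · apply Prod.ext <;> (apply Subtype.ext; rfl)
    · haveI : IsEmpty {x : α // (Multiset.card (x.1).1, (x.1).1.sum) = (r, a)} := by
        constructor
        rintro ⟨⟨⟨A, B⟩, hc, hs⟩, hfib⟩
        have h1 := (Prod.mk.injEq _ _ _ _).mp hfib |>.1
        have h2 := (Prod.mk.injEq _ _ _ _).mp hfib |>.2
        simp only at h1 h2 hc hs
        omega
      exact Nat.card_of_isEmpty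
  have h0 : dimM0 N = Fintype.card α := by
    rw [dimM0, ← Nat.card_eq_fintype_card]
  rw [h0]
  have hmaps : ∀ x : α, x ∈ Finset.univ →
      (Multiset.card (x.1).1, (x.1).1.sum) ∈
        Finset.range (N + 1) ×ˢ Finset.range (N + 1) := by
    intro x _
    simp only [Finset.mem_product, Finset.mem_range]
    have := x.2.2
    omega
  rw [← Finset.card_univ,
    Finset.card_eq_sum_card_fiberwise hmaps]
  rw [Finset.sum_product]
  apply Finset.sum_congr rfl
  intro r hr
  have hr' : r ≤ N := Nat.lt_succ_iff.mp (Finset.mem_range.mp hr)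
  have hfib : ∀ a ∈ Finset.range (N + 1),
      (Finset.univ.filter fun x : α => (Multiset.card (x.1).1, (x.1).1.sum) = (r, a)).card
        = if r + a ≤ N then mcount r a * mcount r (N - r - a) else 0 := by
    intro a _
    rw [← Fintype.card_subtype, ← Nat.card_eq_fintype_card]
    exact key r a
  rw [Finset.sum_congr rfl hfib]
  rw [Finset.Nat.sum_antidiagonal_eq_sum_range_succ_mk]
  rw [← Finset.sum_subset (Finset.range_subset_range.mpr (by omega :
      N - r + 1 ≤ N + 1)) ?_]
  · apply Finset.sum_congr rfl
    intro a ha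
    have ha' : a ≤ N - r := Nat.lt_succ_iff.mp (Finset.mem_range.mp ha)
    rw [if_pos (by omega)]
  · intro a ha hna
    have h1 : N - r < a := by
      simp only [Finset.mem_range] at ha hna
      omega
    rw [if_neg (by omega)]


theorem hilbert_series_M0 (N : ℕ) :
    (dimM0 N : ℚ)
      = PowerSeries.coeff (R := ℚ) N
          ((qPoch (N + 1))⁻¹ *
            ∑ k ∈ Finset.range (N + 1),
              (PowerSeries.X : PowerSeries ℚ) ^ (k ^ 2 + k) * ((qPoch k)⁻¹) ^ 2) := by
  rw [coeff_main N, map_sum]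
  have hterm : ∀ r ∈ Finset.range (N + 1),
      PowerSeries.coeff (R := ℚ) N (X ^ r * (mser r * mser r))
        = ((∑ p ∈ Finset.HasAntidiagonal.antidiagonal (N - r), mcount r p.1 * mcount r p.2 : ℕ) : ℚ) := by
    intro r hr
    have hr' : r ≤ N := Nat.lt_succ_iff.mp (Finset.mem_range.mp hr)
    rw [PowerSeries.coeff_X_pow_mul', if_pos hr', PowerSeries.coeff_mul]
    push_cast
    apply Finset.sum_congr rfl
    intro p hp
    simp [mser]
  rw [Finset.sum_congr rfl hterm, dimM0_eq N]
  push_cast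
  rfl
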